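/- Let α, β : [0,∞) → ℝ be càdlàg functions with α_t ≤ β_t for all t and inf_{t≥0}(β_t − α_t) > 0, and let x : [0,∞) → ℝ be càdlàg. If (y, η) and (y', η') are both solutions of the Skorohod problem on [α, β] for x, then y_t = y'_t and η_t = η'_t for all t ≥ 0 (uniqueness of the Skorohod problem with two time-dependent boundaries). -/

import Mathlib

open Set

/-- A real function on `[0,∞)` is càdlàg: right-continuous at every `t ≥ 0`
and with finite left limits at every `t > 0`. -/
def Cadlag (f : ℝ → ℝ) : Prop :=
  (∀ t : ℝ, 0 ≤ t → ContinuousWithinAt f (Set.Ici t) t) ∧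
  (∀ t : ℝ, 0 < t → ∃ l : ℝ, Filter.Tendsto f (nhdsWithin t (Set.Iio t)) (nhds l))

/-- The reflection term `Ξ_{α,β}(x)` of the extended Skorohod map. -/
noncomputable def Xi (α β x : ℝ → ℝ) (t : ℝ) : ℝ :=
  max (min (max (x 0 - β 0) 0) (sInf ((fun r => x r - α r) '' Set.Icc 0 t)))
    (sSup ((fun s => min (max (x s - β s) 0) (sInf ((fun r => x r - α r) '' Set.Icc s t))) ''
      Set.Icc 0 t))

/-- The extended Skorohod map `Γ_{α,β}(x)_t = x_t - Ξ_{α,β}(x)_t`. -/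
noncomputable def Gamma (α β x : ℝ → ℝ) (t : ℝ) : ℝ := x t - Xi α β x t

/-- `H_{α,β}(x)_t = sup_{0≤s≤t} { (x_s - β_s) ∧ inf_{s≤r≤t} (x_r - α_r) }`. -/
noncomputable def Hmap (α β x : ℝ → ℝ) (t : ℝ) : ℝ :=
  sSup ((fun s => min (x s - β s) (sInf ((fun r => x r - α r) '' Set.Icc s t))) '' Set.Icc 0 t)

/-- `J_{α,β}(x)_t = inf_{0≤s≤t} { (x_s - α_s) ∨ sup_{s≤r≤t} (x_r - β_r) }`. -/
noncomputable def Jmap (α β x : ℝ → ℝ) (t : ℝ) : ℝ :=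
  sInf ((fun s => max (x s - α s) (sSup ((fun r => x r - β r) '' Set.Icc s t))) '' Set.Icc 0 t)

/-- The hitting time `T_α = inf { t > 0 : α_t - x_t ≥ 0 }`, with `inf ∅ = +∞`,
as an extended real number. -/
noncomputable def hitLower (α x : ℝ → ℝ) : EReal :=
  sInf ((fun t : ℝ => (t : EReal)) '' {t : ℝ | 0 < t ∧ 0 ≤ α t - x t})

/-- The hitting time `T^β = inf { t > 0 : x_t - β_t ≥ 0 }`, with `inf ∅ = +∞`,
as an extended real number. -/
noncomputable def hitUpper (β x : ℝ → ℝ) : EReal :=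
  sInf ((fun t : ℝ => (t : EReal)) '' {t : ℝ | 0 < t ∧ 0 ≤ x t - β t})

/-- `(y, η)` is a solution of the Skorohod problem on `[α, β]` for `x`:
`y = x + η` stays in `[α, β]`; `η` is càdlàg of (locally) bounded variation with
`η(0⁻) = 0`, decomposed as `η = ηˡ - ηᵘ` with `ηˡ, ηᵘ` nondecreasing
right-continuous functions vanishing on `(-∞, 0]` (so starting from `0`),
whose Lebesgue–Stieltjes measures put no mass on `{y > α}` and `{y < β}`
respectively (the Skorohod minimality conditions). -/
def IsSkorohodSolution (α β x y η : ℝ → ℝ) : Prop :=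
  Cadlag y ∧ Cadlag η ∧
  (∀ t : ℝ, 0 ≤ t → y t = x t + η t ∧ α t ≤ y t ∧ y t ≤ β t) ∧
  ∃ ηl ηu : StieltjesFunction ℝ,
    (∀ t : ℝ, t ≤ 0 → ηl t = 0) ∧
    (∀ t : ℝ, t ≤ 0 → ηu t = 0) ∧
    (∀ t : ℝ, 0 ≤ t → η t = ηl t - ηu t) ∧
    ηu.measure {s : ℝ | 0 ≤ s ∧ y s < β s} = 0 ∧
    ηl.measure {s : ℝ | 0 ≤ s ∧ α s < y s} = 0


lemma skorohod_le (α β x y η y' η' : ℝ → ℝ)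
    (hsol : IsSkorohodSolution α β x y η)
    (hsol' : IsSkorohodSolution α β x y' η') :
    ∀ t : ℝ, 0 ≤ t → y t ≤ y' t := by
  obtain ⟨-, -, hY, ηl, ηu, hl0, hu0, hdec, hu, hl⟩ := hsol
  obtain ⟨-, -, hY', ηl', ηu', hl0', hu0', hdec', hu', hl'⟩ := hsol'
  intro t ht
  by_contra hcon
  push_neg at hcon
  set F : ℝ → ℝ := fun s => ηl s - ηu s - ηl' s + ηu' s with hFdef
  have hF0 : ∀ s : ℝ, s ≤ 0 → F s = 0 := by
    intro s hs
    simp [hFdef, hl0 s hs, hu0 s hs, hl0' s hs, hu0' s hs]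
  have hFy : ∀ s : ℝ, 0 ≤ s → F s = y s - y' s := by
    intro s hs
    have h1 := (hY s hs).1
    have h2 := (hY' s hs).1
    have h3 := hdec s hs
    have h4 := hdec' s hs
    simp only [hFdef]
    linarith
  set S : Set ℝ := {s : ℝ | s ≤ t ∧ F s ≤ 0} with hSdef
  have hne : (-1 : ℝ) ∈ S := ⟨by linarith, le_of_eq (hF0 _ (by norm_num))⟩
  have hbdd : BddAbove S := ⟨t, fun s hs => hs.1⟩
  set τ : ℝ := sSup S with hτdef
  have hτt : τ ≤ t := csSup_le ⟨_, hne⟩ fun s hs => hs.1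
  have hτ0 : 0 ≤ τ := by
    by_contra h
    push_neg at h
    have : τ / 2 ∈ S := ⟨by linarith, le_of_eq (hF0 _ (by linarith))⟩
    have := le_csSup hbdd this
    linarith
  have hFt : 0 < F t := by rw [hFy t ht]; linarith
  have hpos : ∀ s : ℝ, τ < s → s ≤ t → 0 < F s := by
    intro s h1 h2
    by_contra h
    push_neg at h
    exact absurd (le_csSup hbdd ⟨h2, h⟩) (not_le.2 h1)
  have hmem : ∀ s : ℝ, 0 ≤ s → 0 < F s →
      (s ∈ {u : ℝ | 0 ≤ u ∧ α u < y u} ∧ s ∈ {u : ℝ | 0 ≤ u ∧ y' u < β u}) := by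
    intro s hs hFs
    rw [hFy s hs] at hFs
    have h1 := (hY s hs).2
    have h2 := (hY' s hs).2
    exact ⟨⟨hs, by linarith [h2.1]⟩, ⟨hs, by linarith [h1.2]⟩⟩
  rcases le_or_gt (F τ) 0 with hτle | hτgt
  · -- F ≤ 0 at τ, but ηl and ηu' constant on (τ, t]
    have hsub : Ioc τ t ⊆ {u : ℝ | 0 ≤ u ∧ α u < y u} := fun s hs =>
      (hmem s (le_trans hτ0 hs.1.le) (hpos s hs.1 hs.2)).1
    have hsub' : Ioc τ t ⊆ {u : ℝ | 0 ≤ u ∧ y' u < β u} := fun s hs =>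
      (hmem s (le_trans hτ0 hs.1.le) (hpos s hs.1 hs.2)).2
    have h1 : ηl.measure (Ioc τ t) = 0 := MeasureTheory.measure_mono_null hsub hl
    have h2 : ηu'.measure (Ioc τ t) = 0 := MeasureTheory.measure_mono_null hsub' hu'
    rw [StieltjesFunction.measure_Ioc, ENNReal.ofReal_eq_zero] at h1 h2
    have e1 : ηl t = ηl τ := le_antisymm (by linarith) (ηl.mono hτt)
    have e2 : ηu' t = ηu' τ := le_antisymm (by linarith) (ηu'.mono hτt)
    have m1 : ηu τ ≤ ηu t := ηu.mono hτt
    have m2 : ηl' τ ≤ ηl' t := ηl'.mono hτt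
    have : F t ≤ F τ := by simp only [hFdef]; linarith
    linarith
  · -- F τ > 0 : look at the left limit at τ
    obtain ⟨hA, hB⟩ := hmem τ hτ0 hτgt
    have h1 : ηl.measure {τ} = 0 := MeasureTheory.measure_mono_null (by simpa using hA) hl
    have h2 : ηu'.measure {τ} = 0 := MeasureTheory.measure_mono_null (by simpa using hB) hu'
    rw [StieltjesFunction.measure_singleton, ENNReal.ofReal_eq_zero] at h1 h2
    have e1 : ηl τ = Function.leftLim ηl τ :=
      le_antisymm (by linarith) (ηl.mono.leftLim_le le_rfl)
    have e2 : ηu' τ = Function.leftLim ηu' τ :=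
      le_antisymm (by linarith) (ηu'.mono.leftLim_le le_rfl)
    set L : ℝ := Function.leftLim ηl τ - Function.leftLim ηu τ - Function.leftLim ηl' τ +
      Function.leftLim ηu' τ with hLdef
    have hLF : Filter.Tendsto F (nhdsWithin τ (Iio τ)) (nhds L) := by
      exact (((ηl.mono.tendsto_leftLim τ).sub (ηu.mono.tendsto_leftLim τ)).sub
        (ηl'.mono.tendsto_leftLim τ)).add (ηu'.mono.tendsto_leftLim τ)
    have hL : L ≤ 0 := by
      by_contra hLpos
      push_neg at hLpos
      have hev : ∀ᶠ s in nhdsWithin τ (Iio τ), 0 < F s :=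
        hLF.eventually (eventually_gt_nhds hLpos)
      have hfreq : ∃ᶠ s in nhdsWithin τ (Iio τ), F s ≤ 0 := by
        rw [Filter.frequently_iff]
        intro U hU
        rw [mem_nhdsLT_iff_exists_Ioo_subset] at hU
        obtain ⟨a, ha, hsub⟩ := hU
        obtain ⟨s, hsS, has⟩ := exists_lt_of_lt_csSup ⟨_, hne⟩ ha
        have hsτ : s < τ := lt_of_le_of_ne (le_csSup hbdd hsS)
          (fun h => absurd (h ▸ hsS.2) (not_le.2 hτgt))
        exact ⟨s, hsub ⟨has, hsτ⟩, hsS.2⟩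
      obtain ⟨s, h1, h2⟩ := (hfreq.and_eventually hev).exists
      linarith
    have m1 : Function.leftLim ηu τ ≤ ηu τ := ηu.mono.leftLim_le le_rfl
    have m2 : Function.leftLim ηl' τ ≤ ηl' τ := ηl'.mono.leftLim_le le_rfl
    have : F τ ≤ L := by simp only [hFdef, hLdef]; linarith
    linarith

/-- Uniqueness for the Skorohod problem with two time-dependent boundaries:
two solutions `(y, η)` and `(y', η')` for the same input `x` coincide. -/
theorem skorohodSolution_unique (α β x y η y' η' : ℝ → ℝ)
    (hα : Cadlag α) (hβ : Cadlag β) (hx : Cadlag x)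
    (hle : ∀ t : ℝ, 0 ≤ t → α t ≤ β t)
    (hgap : 0 < sInf ((fun t => β t - α t) '' Set.Ici (0 : ℝ)))
    (hsol : IsSkorohodSolution α β x y η)
    (hsol' : IsSkorohodSolution α β x y' η') :
    ∀ t : ℝ, 0 ≤ t → y t = y' t ∧ η t = η' t := by
  intro t ht
  have hy : y t = y' t :=
    le_antisymm (skorohod_le α β x y η y' η' hsol hsol' t ht)
      (skorohod_le α β x y' η' y η hsol' hsol t ht)
  refine ⟨hy, ?_⟩
  have h1 := (hsol.2.2.1 t ht).1
  have h2 := (hsol'.2.2.1 t ht).1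
  linarith
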